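/- arXiv:1908.02253 — 2 statements merged into one kernel-verified Lean document; each statement's English description precedes it below -/
import Mathlib

section
/- (Claim 3) Let k ≥ 1, let A ⊆ [k]^2 be a compressed set, and let B be the initial segment of the ≤-order on [k]^2 with |B| = |A|. Then |d(A)| ≥ |d(B)|. -/
open Finset
open scoped Classical

/-- `R_i(x)`: the set of coordinates of `x` equal to `i`.
The ambient alphabet is `[k+1] = {0,…,k}`. -/
noncomputable def rset {k N : ℕ} (x : Fin N → Fin (k + 1)) (i : ℕ) : Finset (Fin N) :=
  Finset.univ.filter fun j => (x j : ℕ) = i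

/-- the strict binary order on finite sets of coordinates:
`X <_bin Y` iff `X ≠ Y` and `max (X Δ Y) ∈ Y`. -/
def binLT {N : ℕ} (X Y : Finset (Fin N)) : Prop :=
  ∃ m ∈ Y, m ∉ X ∧ ∀ j : Fin N, ((j ∈ X ∧ j ∉ Y) ∨ (j ∈ Y ∧ j ∉ X)) → j ≤ m

/-- the strict `≤`-order on `[k+1]^N`: `x < y` iff `|R_0(x)| > |R_0(y)|`, or
`|R_0(x)| = |R_0(y)|` and for the largest `i` with `R_i(x) ≠ R_i(y)` we have
`max (R_i(x) Δ R_i(y)) ∈ R_i(y)`. -/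
def plt {k N : ℕ} (x y : Fin N → Fin (k + 1)) : Prop :=
  (rset y 0).card < (rset x 0).card ∨
    ((rset x 0).card = (rset y 0).card ∧
      ∃ i : ℕ, binLT (rset x i) (rset y i) ∧ ∀ j : ℕ, i < j → rset x j = rset y j)

/-- the `≤`-order on `[k+1]^N`. -/
def ple {k N : ℕ} (x y : Fin N → Fin (k + 1)) : Prop := x = y ∨ plt x y

/-- `B` is an initial segment of the `≤`-order. -/
def isInitSeg {k N : ℕ} (B : Finset (Fin N → Fin (k + 1))) : Prop :=
  ∀ y ∈ B, ∀ x, ple x y → x ∈ B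

/-- the `d`-shadow: all points obtained from a point of `A` by flipping one
nonzero coordinate to `0`. -/
noncomputable def dShadow {k N : ℕ} (A : Finset (Fin N → Fin (k + 1))) :
    Finset (Fin N → Fin (k + 1)) :=
  A.biUnion fun x =>
    (Finset.univ.filter fun i => x i ≠ 0).image fun i => Function.update x i 0

/-- the initial segment of the `≤`-order on `[k+1]^N` of cardinality `m`. -/
noncomputable def initSeg (k N m : ℕ) : Finset (Fin N → Fin (k + 1)) :=
  Finset.univ.filter fun x => (Finset.univ.filter fun y => ple y x).card ≤ m

/-- the `C_s`-compression of `A ⊆ [k+1]^(n+1)`: replace each slice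
`A_{s,t} = {y : t_s y ∈ A}` by the initial segment of the same size. -/
noncomputable def compress {k n : ℕ} (s : Fin (n + 1)) (A : Finset (Fin (n + 1) → Fin (k + 1))) :
    Finset (Fin (n + 1) → Fin (k + 1)) :=
  Finset.univ.biUnion fun t : Fin (k + 1) =>
    (initSeg k n
        (Finset.univ.filter fun y : Fin n → Fin (k + 1) => s.insertNth t y ∈ A).card).image
      fun y => s.insertNth t y

/-- `A` is compressed if every `C_s`-compression fixes it. -/
def IsCompressed {k n : ℕ} (A : Finset (Fin (n + 1) → Fin (k + 1))) : Prop :=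
  ∀ s : Fin (n + 1), compress s A = A

/-- `B_r`: points with exactly `r` zero coordinates. -/
noncomputable def Bexact (k N r : ℕ) : Finset (Fin N → Fin (k + 1)) :=
  Finset.univ.filter fun x => (rset x 0).card = r

/-- `B_{≥r}`: points with at least `r` zero coordinates. -/
noncomputable def Bge (k N r : ℕ) : Finset (Fin N → Fin (k + 1)) :=
  Finset.univ.filter fun x => r ≤ (rset x 0).card

/-- `m(x)`: the largest coordinate value of `x`. -/
noncomputable def mval {k N : ℕ} (x : Fin N → Fin (k + 1)) : ℕ :=
  Finset.univ.sup fun i => (x i : ℕ)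

/-- the class `C_X`: points with maximal coordinate `s`, attained exactly on `X`,
and exactly `r` zero coordinates. -/
noncomputable def classSet (k N s r : ℕ) (X : Finset (Fin N)) : Finset (Fin N → Fin (k + 1)) :=
  Finset.univ.filter fun x => mval x = s ∧ rset x s = X ∧ (rset x 0).card = r

/-- `[m]^N = {0,…,m−1}^N`. -/
noncomputable def box (k N m : ℕ) : Finset (Fin N → Fin (k + 1)) :=
  Finset.univ.filter fun x => ∀ i, (x i : ℕ) < m

/-- `{1,…,s−1}^N`. -/
noncomputable def box1 (k N s : ℕ) : Finset (Fin N → Fin (k + 1)) :=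
  Finset.univ.filter fun x => ∀ i, 1 ≤ (x i : ℕ) ∧ (x i : ℕ) ≤ s - 1

/-- `B` is a down-set. -/
def isDownSet {k N : ℕ} (B : Finset (Fin N → Fin (k + 1))) : Prop :=
  ∀ y ∈ B, ∀ x : Fin N → Fin (k + 1), (∀ j, (x j : ℕ) ≤ (y j : ℕ)) → x ∈ B


section Claim3Aux

variable {k : ℕ}

lemma c3_mem_rset {N : ℕ} {x : Fin N → Fin (k+1)} {i : ℕ} {j : Fin N} :
    j ∈ rset x i ↔ (x j : ℕ) = i := by simp [rset]

lemma c3_eta2 (x : Fin (1+1) → Fin (k+1)) : x = ![x 0, x 1] := by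
  funext j; fin_cases j <;> simp

lemma c3_fin2_le_one (j : Fin (1+1)) : j ≤ (1 : Fin (1+1)) := by fin_cases j <;> decide

lemma c3_rset_pair_zero_card {a b : Fin (k+1)} (ha : 1 ≤ (a:ℕ)) (hb : 1 ≤ (b:ℕ)) :
    (rset ![a,b] 0).card = 0 := by
  rw [Finset.card_eq_zero]; ext j; fin_cases j <;> simp [rset] <;> simp only [Fin.ext_iff, Fin.val_zero] at * <;> omega

lemma c3_plt_axis_int {z w : Fin (1+1) → Fin (k+1)} (hz : (z 0 : ℕ) = 0 ∨ (z 1 : ℕ) = 0)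
    (h0 : 1 ≤ (w 0 : ℕ)) (h1 : 1 ≤ (w 1 : ℕ)) : plt z w := by
  left
  have hw : (rset w 0).card = 0 := by
    rw [Finset.card_eq_zero]; ext j; fin_cases j <;> simp [rset] <;> simp only [Fin.ext_iff, Fin.val_zero] at * <;> omega
  rw [hw]
  rcases hz with h | h
  · exact Finset.card_pos.2 ⟨0, c3_mem_rset.2 h⟩
  · exact Finset.card_pos.2 ⟨1, c3_mem_rset.2 h⟩

lemma c3_plt_int_maxlt {a b c d : Fin (k+1)} (ha : 1 ≤ (a:ℕ)) (hb : 1 ≤ (b:ℕ))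
    (hc : 1 ≤ (c:ℕ)) (hd : 1 ≤ (d:ℕ)) (h : max (a:ℕ) (b:ℕ) < max (c:ℕ) (d:ℕ)) :
    plt ![a,b] ![c,d] := by
  right
  refine ⟨by rw [c3_rset_pair_zero_card ha hb, c3_rset_pair_zero_card hc hd], max (c:ℕ) (d:ℕ), ?_, ?_⟩
  · by_cases hdm : (d:ℕ) = max (c:ℕ) (d:ℕ)
    · refine ⟨1, c3_mem_rset.2 (by simpa using hdm.symm), ?_, fun j _ => c3_fin2_le_one j⟩
      simp only [c3_mem_rset]; simp; omega
    · have hcm : (c:ℕ) = max (c:ℕ) (d:ℕ) := by omega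
      refine ⟨0, c3_mem_rset.2 (by simpa using hcm.symm), ?_, fun j hj => ?_⟩
      · simp only [c3_mem_rset]; simp; omega
      · rcases hj with ⟨hj1, _⟩ | ⟨hj1, _⟩
        · exfalso; fin_cases j <;> simp [rset] at hj1 <;> omega
        · fin_cases j
          · exact le_refl _
          · exfalso; simp [rset] at hj1; omega
  · intro j hj; ext jj; fin_cases jj <;> simp [rset] <;> omega

lemma c3_plt_shell {s b : Fin (k+1)} (hs : 2 ≤ (s:ℕ)) (hb : 1 ≤ (b:ℕ)) (hbs : (b:ℕ) < (s:ℕ)) :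
    plt ![s,b] ![(1 : Fin (k+1)),s] := by
  have hk : 0 < k := by have := s.isLt; omega
  have h1 : ((1 : Fin (k+1)) : ℕ) = 1 := by
    rw [Fin.val_one']; exact Nat.mod_eq_of_lt (by omega)
  right
  refine ⟨by rw [c3_rset_pair_zero_card (by omega) hb, c3_rset_pair_zero_card (by omega) (by omega)],
    (s:ℕ), ?_, ?_⟩
  · refine ⟨1, c3_mem_rset.2 (by simp), ?_, fun j _ => c3_fin2_le_one j⟩
    intro hcon; rw [c3_mem_rset] at hcon; simp at hcon; omega
  · have h1' : 1 % (k + 1) = 1 := Nat.mod_eq_of_lt (by omega)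
    intro j hj; ext jj; fin_cases jj <;> simp [rset, h1', Fin.val_one'] <;> omega

lemma c3_rset0_pair {a b : Fin (k+1)} (ha : 1 ≤ (a:ℕ)) :
    rset ![a,b] 0 = if (b:ℕ) = 0 then {1} else ∅ := by
  split <;> (ext jj; fin_cases jj <;> simp [rset] <;> simp only [Fin.ext_iff, Fin.val_zero] at * <;> omega)

lemma c3_ple_dec0 {a b v : Fin (k+1)} (h : (v:ℕ) ≤ (a:ℕ)) : ple ![v,b] ![a,b] := by
  rcases eq_or_lt_of_le h with h | h
  · left; have : v = a := Fin.ext h; rw [this]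
  right
  rcases Nat.eq_zero_or_pos (v:ℕ) with hv | hv
  · left
    have hy : rset ![a,b] 0 = if (b:ℕ) = 0 then {1} else ∅ := c3_rset0_pair (by omega)
    have hx : rset ![v,b] 0 = if (b:ℕ) = 0 then ({0,1} : Finset (Fin (1+1))) else {0} := by
      split <;> (ext jj; fin_cases jj <;> simp [rset] <;> simp only [Fin.ext_iff, Fin.val_zero] at * <;> omega)
    rw [hx, hy]; split <;> simp
  · right
    refine ⟨by rw [c3_rset0_pair hv, c3_rset0_pair (by omega)], (a:ℕ), ?_, ?_⟩
    · by_cases hba : (b:ℕ) = (a:ℕ)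
      · refine ⟨0, c3_mem_rset.2 (by simp), ?_, ?_⟩
        · intro hcon; rw [c3_mem_rset] at hcon; simp at hcon; omega
        · intro j hj; fin_cases j
          · exact le_refl _
          · exfalso; rcases hj with ⟨h1, h2⟩ | ⟨h1, h2⟩ <;>
              [skip; skip] <;> (rw [c3_mem_rset] at h1; apply h2; rw [c3_mem_rset]) <;>
              simp at h1 ⊢ <;> omega
      · refine ⟨0, c3_mem_rset.2 (by simp), ?_, ?_⟩
        · intro hcon; rw [c3_mem_rset] at hcon; simp at hcon; omega
        · intro j hj; fin_cases j
          · exact le_refl _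
          · exfalso; rcases hj with ⟨h1, _⟩ | ⟨h1, _⟩ <;> (rw [c3_mem_rset] at h1; simp at h1) <;> omega
    · intro j hj; ext jj; fin_cases jj <;> simp [rset] <;> omega

lemma c3_ple_dec1 {a b v : Fin (k+1)} (h : (v:ℕ) ≤ (b:ℕ)) : ple ![a,v] ![a,b] := by
  rcases eq_or_lt_of_le h with h | h
  · left; have : v = b := Fin.ext h; rw [this]
  right
  rcases Nat.eq_zero_or_pos (v:ℕ) with hv | hv
  · left
    have hx : rset ![a,v] 0 = if (a:ℕ) = 0 then ({0,1} : Finset (Fin (1+1))) else {1} := by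
      split <;> (ext jj; fin_cases jj <;> simp [rset] <;> simp only [Fin.ext_iff, Fin.val_zero] at * <;> omega)
    have hy : rset ![a,b] 0 = if (a:ℕ) = 0 then {0} else ∅ := by
      split <;> (ext jj; fin_cases jj <;> simp [rset] <;> simp only [Fin.ext_iff, Fin.val_zero] at * <;> omega)
    rw [hx, hy]; split <;> simp
  · right
    have hcards : (rset ![a,v] 0).card = (rset ![a,b] 0).card := by
      have hx : rset ![a,v] 0 = if (a:ℕ) = 0 then {0} else ∅ := by
        split <;> (ext jj; fin_cases jj <;> simp [rset] <;> simp only [Fin.ext_iff, Fin.val_zero] at * <;> omega)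
      have hy : rset ![a,b] 0 = if (a:ℕ) = 0 then {0} else ∅ := by
        split <;> (ext jj; fin_cases jj <;> simp [rset] <;> simp only [Fin.ext_iff, Fin.val_zero] at * <;> omega)
      rw [hx, hy]
    refine ⟨hcards, (b:ℕ), ⟨1, c3_mem_rset.2 (by simp), ?_, fun j _ => c3_fin2_le_one j⟩, ?_⟩
    · intro hcon; rw [c3_mem_rset] at hcon; simp at hcon; omega
    · intro j hj; ext jj; fin_cases jj <;> simp [rset] <;> omega

lemma c3_rset_one (x : Fin 1 → Fin (k+1)) (i : ℕ) :
    rset x i = if (x 0 : ℕ) = i then {0} else ∅ := by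
  split <;> (ext jj; fin_cases jj <;> simp [rset] <;> omega)

lemma c3_plt_one_iff {x y : Fin 1 → Fin (k+1)} : plt x y ↔ (x 0 : ℕ) < (y 0 : ℕ) := by
  constructor
  · intro h
    by_contra hcon
    push_neg at hcon
    rcases h with h | ⟨hc, i, ⟨m, hmY, hmX, _⟩, hgt⟩
    · rw [c3_rset_one, c3_rset_one] at h; split_ifs at h <;> simp at h <;> omega
    · have hm0 : m = 0 := Fin.eq_zero m
      subst hm0
      rw [c3_mem_rset] at hmY
      have hxi : ¬ (x 0 : ℕ) = i := fun hh => hmX (c3_mem_rset.2 hh)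
      have hilt : i < (x 0 : ℕ) := by omega
      have := hgt (x 0 : ℕ) hilt
      have h0 : (0 : Fin 1) ∈ rset x (x 0 : ℕ) := c3_mem_rset.2 rfl
      rw [this, c3_mem_rset] at h0
      omega
  · intro h
    rcases Nat.eq_zero_or_pos (x 0 : ℕ) with hx0 | hx0
    · left
      rw [c3_rset_one, c3_rset_one]
      rw [if_pos hx0, if_neg (by omega)]
      simp
    · right
      refine ⟨?_, (y 0 : ℕ), ⟨0, c3_mem_rset.2 rfl, ?_, fun j _ => Fin.le_def.2 (by omega)⟩, ?_⟩
      · rw [c3_rset_one, c3_rset_one, if_neg (by omega), if_neg (by omega)]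
      · intro hcon; rw [c3_mem_rset] at hcon; omega
      · intro j hj; rw [c3_rset_one, c3_rset_one, if_neg (by omega), if_neg (by omega)]

lemma c3_ple_one_iff {x y : Fin 1 → Fin (k+1)} : ple x y ↔ (x 0 : ℕ) ≤ (y 0 : ℕ) := by
  constructor
  · rintro (rfl | h)
    · exact le_refl _
    · exact le_of_lt (c3_plt_one_iff.1 h)
  · intro h
    rcases eq_or_lt_of_le h with h | h
    · left; funext j; rw [Fin.eq_zero j]; exact Fin.ext h
    · right; exact c3_plt_one_iff.2 h

lemma c3_mem_initSeg_of_le {m : ℕ} {y y' : Fin 1 → Fin (k+1)} (h : (y' 0 : ℕ) ≤ (y 0 : ℕ))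
    (hy : y ∈ initSeg k 1 m) : y' ∈ initSeg k 1 m := by
  simp only [initSeg, Finset.mem_filter, Finset.mem_univ, true_and] at hy ⊢
  refine le_trans (Finset.card_le_card fun z hz => ?_) hy
  simp only [Finset.mem_filter, Finset.mem_univ, true_and, c3_ple_one_iff] at hz ⊢
  omega

lemma c3_slice_initSeg {A : Finset (Fin (1+1) → Fin (k+1))} (hA : IsCompressed A)
    (s : Fin (1+1)) (t : Fin (k+1)) (y : Fin 1 → Fin (k+1)) :
    s.insertNth t y ∈ A ↔
      y ∈ initSeg k 1 (Finset.univ.filter fun y : Fin 1 → Fin (k+1) => s.insertNth t y ∈ A).card := by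
  constructor
  · intro hx
    have := hA s
    rw [← this] at hx
    rw [compress, Finset.mem_biUnion] at hx
    obtain ⟨t', -, hx⟩ := hx
    rw [Finset.mem_image] at hx
    obtain ⟨y', hy', heq⟩ := hx
    have ht : t' = t := by
      have := congrFun heq s
      simpa [Fin.insertNth_apply_same] using this
    subst ht
    have hyy : y' = y := by
      funext j
      rw [Fin.eq_zero j]
      have := congrFun heq (s.succAbove 0)
      simpa [Fin.insertNth_apply_succAbove] using this
    subst hyy
    exact hy'
  · intro hy
    have := hA s
    rw [← this, compress, Finset.mem_biUnion]
    exact ⟨t, Finset.mem_univ t, Finset.mem_image.2 ⟨y, hy, rfl⟩⟩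

lemma c3_insertNth_one_pair (t : Fin (k+1)) (p : Fin 1 → Fin (k+1)) :
    (1 : Fin (1+1)).insertNth t p = ![p 0, t] := by
  have h : (1 : Fin (1+1)) = Fin.last 1 := rfl
  rw [h, Fin.insertNth_last']
  funext j; fin_cases j
  · simp [Fin.snoc]
  · simp [Fin.snoc]

lemma c3_insertNth_zero_pair (t : Fin (k+1)) (p : Fin 1 → Fin (k+1)) :
    (0 : Fin (1+1)).insertNth t p = ![t, p 0] := by
  rw [Fin.insertNth_zero']
  funext j; fin_cases j <;> simp

lemma c3_downset_of_compressed {A : Finset (Fin (1+1) → Fin (k+1))} (hA : IsCompressed A) :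
    isDownSet A := by
  have ds0 : ∀ x ∈ A, ∀ v : Fin (k+1), (v:ℕ) ≤ (x 0 : ℕ) → ![v, x 1] ∈ A := by
    intro x hx v hv
    have hrm : (1 : Fin (1+1)).removeNth x = fun _ => x 0 := by
      funext j; rw [Fin.eq_zero j]; rfl
    have hxeq : (1 : Fin (1+1)).insertNth (x 1) (fun _ => x 0) ∈ A := by
      rw [← hrm, Fin.insertNth_self_removeNth]; exact hx
    have h1 := (c3_slice_initSeg hA 1 (x 1) _).1 hxeq
    have h2 := c3_mem_initSeg_of_le (y' := fun _ => v) hv h1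
    have h3 := (c3_slice_initSeg hA 1 (x 1) _).2 h2
    rwa [c3_insertNth_one_pair] at h3
  have ds1 : ∀ x ∈ A, ∀ v : Fin (k+1), (v:ℕ) ≤ (x 1 : ℕ) → ![x 0, v] ∈ A := by
    intro x hx v hv
    have hrm : (0 : Fin (1+1)).removeNth x = fun _ => x 1 := by
      funext j; rw [Fin.eq_zero j]; rfl
    have hxeq : (0 : Fin (1+1)).insertNth (x 0) (fun _ => x 1) ∈ A := by
      rw [← hrm, Fin.insertNth_self_removeNth]; exact hx
    have h1 := (c3_slice_initSeg hA 0 (x 0) _).1 hxeq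
    have h2 := c3_mem_initSeg_of_le (y' := fun _ => v) hv h1
    have h3 := (c3_slice_initSeg hA 0 (x 0) _).2 h2
    rwa [c3_insertNth_zero_pair] at h3
  intro y hy x hxy
  have hmid : ![x 0, y 1] ∈ A := ds0 y hy (x 0) (hxy 0)
  have := ds1 _ hmid (x 1) (by simpa using hxy 1)
  rw [c3_eta2 x]
  simpa using this

lemma c3_downset_of_initSeg {B : Finset (Fin (1+1) → Fin (k+1))} (hB : isInitSeg B) :
    isDownSet B := by
  intro y hy x hxy
  have hmid : ![x 0, y 1] ∈ B := by
    refine hB y hy _ ?_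
    have := c3_ple_dec0 (b := y 1) (hxy 0)
    rwa [← c3_eta2 y] at this
  have hx : ![x 0, x 1] ∈ B := hB _ hmid _ (by
    have := c3_ple_dec1 (a := x 0) (b := y 1) (v := x 1) (by simpa using hxy 1)
    simpa using this)
  rw [c3_eta2 x]; exact hx

lemma c3_mem_dShadow {N : ℕ} {S : Finset (Fin N → Fin (k+1))} {z : Fin N → Fin (k+1)} :
    z ∈ dShadow S ↔ ∃ x ∈ S, ∃ i, x i ≠ 0 ∧ Function.update x i 0 = z := by
  simp [dShadow]

lemma c3_upd0 (x : Fin (1+1) → Fin (k+1)) :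
    Function.update x (0 : Fin (1+1)) (0 : Fin (k+1)) = ![0, x 1] := by
  funext j; fin_cases j
  · rw [show ((⟨0, by omega⟩ : Fin (1+1))) = (0 : Fin (1+1)) from rfl]
    rw [Function.update_self]; simp
  · rw [show ((⟨1, by omega⟩ : Fin (1+1))) = (1 : Fin (1+1)) from rfl]
    rw [Function.update_of_ne (by decide)]; simp

lemma c3_upd1 (x : Fin (1+1) → Fin (k+1)) :
    Function.update x (1 : Fin (1+1)) (0 : Fin (k+1)) = ![x 0, 0] := by
  funext j; fin_cases j
  · rw [show ((⟨0, by omega⟩ : Fin (1+1))) = (0 : Fin (1+1)) from rfl]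
    rw [Function.update_of_ne (by decide)]; simp
  · rw [show ((⟨1, by omega⟩ : Fin (1+1))) = (1 : Fin (1+1)) from rfl]
    rw [Function.update_self]; simp

end Claim3Aux

section Claim3Aux2
variable {k : ℕ}

/-- row and column sections through value 1 -/
noncomputable def c3_rowF (k : ℕ) (S : Finset (Fin (1+1) → Fin (k+1))) : Finset (Fin (k+1)) :=
  Finset.univ.filter fun b : Fin (k+1) => ![(1 : Fin (k+1)), b] ∈ S

noncomputable def c3_colF (k : ℕ) (S : Finset (Fin (1+1) → Fin (k+1))) : Finset (Fin (k+1)) :=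
  Finset.univ.filter fun a : Fin (k+1) => ![a, (1 : Fin (k+1))] ∈ S

noncomputable def c3_axes (k : ℕ) : Finset (Fin (1+1) → Fin (k+1)) :=
  (Finset.univ.image fun a : Fin (k+1) => ![a, 0]) ∪ (Finset.univ.image fun b : Fin (k+1) => ![0, b])

lemma c3_fin2_cases (i : Fin (1+1)) : i = 0 ∨ i = 1 := by
  fin_cases i
  · exact Or.inl rfl
  · exact Or.inr rfl

lemma c3_pair_eq {a b a' b' : Fin (k+1)} (h : ![a,b] = ![a',b']) : a = a' ∧ b = b' :=
  ⟨by simpa using congrFun h 0, by simpa using congrFun h 1⟩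

lemma c3_mem_axes {z : Fin (1+1) → Fin (k+1)} :
    z ∈ c3_axes k ↔ ((z 0 : ℕ) = 0 ∨ (z 1 : ℕ) = 0) := by
  constructor
  · intro h
    rcases Finset.mem_union.1 h with h | h <;> obtain ⟨a, -, rfl⟩ := Finset.mem_image.1 h <;> simp
  · intro h
    rcases h with h | h
    · refine Finset.mem_union_right _ (Finset.mem_image.2 ⟨z 1, Finset.mem_univ _, ?_⟩)
      conv_rhs => rw [c3_eta2 z]
      rw [show z 0 = (0 : Fin (k+1)) from Fin.ext h]
    · refine Finset.mem_union_left _ (Finset.mem_image.2 ⟨z 0, Finset.mem_univ _, ?_⟩)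
      conv_rhs => rw [c3_eta2 z]
      rw [show z 1 = (0 : Fin (k+1)) from Fin.ext h]

lemma c3_card_axes : (c3_axes k).card = 2 * k + 1 := by
  have hinj1 : Function.Injective (fun a : Fin (k+1) => ![a, (0 : Fin (k+1))]) :=
    fun u v h => (c3_pair_eq h).1
  have hinj2 : Function.Injective (fun b : Fin (k+1) => ![(0 : Fin (k+1)), b]) :=
    fun u v h => (c3_pair_eq h).2
  have h1 : (Finset.univ.image fun a : Fin (k+1) => ![a, (0:Fin (k+1))]).card = k + 1 := by
    rw [Finset.card_image_of_injective _ hinj1]; simp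
  have h2 : (Finset.univ.image fun b : Fin (k+1) => ![(0:Fin (k+1)), b]).card = k + 1 := by
    rw [Finset.card_image_of_injective _ hinj2]; simp
  have hint : (Finset.univ.image fun a : Fin (k+1) => ![a, (0:Fin (k+1))]) ∩
      (Finset.univ.image fun b : Fin (k+1) => ![(0:Fin (k+1)), b]) = {![0,0]} := by
    ext z
    simp only [Finset.mem_inter, Finset.mem_image, Finset.mem_singleton]
    constructor
    · rintro ⟨⟨a, -, rfl⟩, ⟨b, -, hb⟩⟩
      rw [(c3_pair_eq hb.symm).1]
    · rintro rfl
      exact ⟨⟨0, Finset.mem_univ _, rfl⟩, ⟨0, Finset.mem_univ _, rfl⟩⟩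
  have := Finset.card_union_add_card_inter
    (Finset.univ.image fun a : Fin (k+1) => ![a, (0:Fin (k+1))])
    (Finset.univ.image fun b : Fin (k+1) => ![(0:Fin (k+1)), b])
  rw [hint, h1, h2] at this
  simp only [Finset.card_singleton] at this
  have : (c3_axes k).card + 1 = (k+1) + (k+1) := this
  omega

lemma c3_shadow_card_lower (hk : 0 < k) (S : Finset (Fin (1+1) → Fin (k+1))) :
    (c3_rowF k S).card + (c3_colF k S).card ≤ (dShadow S).card + 1 := by
  have h1v : ((1 : Fin (k+1)) : ℕ) = 1 := by rw [Fin.val_one']; exact Nat.mod_eq_of_lt (by omega)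
  set X := (c3_rowF k S).image fun b => ![(0 : Fin (k+1)), b] with hX
  set Y := (c3_colF k S).image fun a => ![a, (0 : Fin (k+1))] with hY
  have hXsub : X ⊆ dShadow S := by
    intro z hz
    obtain ⟨b, hb, rfl⟩ := Finset.mem_image.1 hz
    rw [c3_rowF, Finset.mem_filter] at hb
    refine c3_mem_dShadow.2 ⟨![(1 : Fin (k+1)), b], hb.2, 0, ?_, ?_⟩
    · intro hcon; have hcc : k = 0 := by simpa using hcon
      omega
    · rw [c3_upd0]; simp
  have hYsub : Y ⊆ dShadow S := by
    intro z hz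
    obtain ⟨a, ha, rfl⟩ := Finset.mem_image.1 hz
    rw [c3_colF, Finset.mem_filter] at ha
    refine c3_mem_dShadow.2 ⟨![a, (1 : Fin (k+1))], ha.2, 1, ?_, ?_⟩
    · intro hcon; have hcc : k = 0 := by simpa using hcon
      omega
    · rw [c3_upd1]; simp
  have hXcard : X.card = (c3_rowF k S).card :=
    Finset.card_image_of_injective _ (fun u v h => (c3_pair_eq h).2)
  have hYcard : Y.card = (c3_colF k S).card :=
    Finset.card_image_of_injective _ (fun u v h => (c3_pair_eq h).1)
  have hintc : (X ∩ Y).card ≤ 1 := by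
    refine Finset.card_le_one.2 fun u hu v hv => ?_
    have h00 : ∀ w ∈ X ∩ Y, w = ![(0:Fin (k+1)),0] := by
      intro w hw
      obtain ⟨b, -, rfl⟩ := Finset.mem_image.1 (Finset.mem_inter.1 hw).1
      obtain ⟨a, -, hab⟩ := Finset.mem_image.1 (Finset.mem_inter.1 hw).2
      rw [(c3_pair_eq hab.symm).2]
    rw [h00 u hu, h00 v hv]
  have hcu := Finset.card_union_add_card_inter X Y
  have hsub : X ∪ Y ⊆ dShadow S := Finset.union_subset hXsub hYsub
  have := Finset.card_le_card hsub
  omega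

lemma c3_shadow_card_upper (hk : 0 < k) (S : Finset (Fin (1+1) → Fin (k+1)))
    (hS : isDownSet S) (h10 : ![(1:Fin (k+1)), 0] ∈ S) (h01 : ![(0:Fin (k+1)), 1] ∈ S) :
    (dShadow S).card + 1 ≤ (c3_rowF k S).card + (c3_colF k S).card := by
  have h1v : ((1 : Fin (k+1)) : ℕ) = 1 := by rw [Fin.val_one']; exact Nat.mod_eq_of_lt (by omega)
  have h1m : 1 % (k+1) = 1 := Nat.mod_eq_of_lt (by omega)
  set X := (c3_rowF k S).image fun b => ![(0 : Fin (k+1)), b] with hX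
  set Y := (c3_colF k S).image fun a => ![a, (0 : Fin (k+1))] with hY
  have hsub : dShadow S ⊆ X ∪ Y := by
    intro z hz
    obtain ⟨x, hx, i, hi, hupd⟩ := c3_mem_dShadow.1 hz
    have hival : (x i : ℕ) ≠ 0 := fun hc => hi (Fin.ext hc)
    rcases c3_fin2_cases i with rfl | rfl
    · refine Finset.mem_union_left _ (Finset.mem_image.2 ⟨x 1, ?_, ?_⟩)
      · rw [c3_rowF, Finset.mem_filter]
        refine ⟨Finset.mem_univ _, hS x hx _ ?_⟩
        intro j; rcases c3_fin2_cases j with rfl | rfl <;> simp [h1v, h1m] <;> omega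
      · rw [← hupd, c3_upd0]
    · refine Finset.mem_union_right _ (Finset.mem_image.2 ⟨x 0, ?_, ?_⟩)
      · rw [c3_colF, Finset.mem_filter]
        refine ⟨Finset.mem_univ _, hS x hx _ ?_⟩
        intro j; rcases c3_fin2_cases j with rfl | rfl <;> simp [h1v, h1m] <;> omega
      · rw [← hupd, c3_upd1]
  have hXcard : X.card = (c3_rowF k S).card :=
    Finset.card_image_of_injective _ (fun u v h => (c3_pair_eq h).2)
  have hYcard : Y.card = (c3_colF k S).card :=
    Finset.card_image_of_injective _ (fun u v h => (c3_pair_eq h).1)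
  have h00 : ![(0:Fin (k+1)), 0] ∈ X ∩ Y := by
    refine Finset.mem_inter.2 ⟨Finset.mem_image.2 ⟨0, ?_, rfl⟩, Finset.mem_image.2 ⟨0, ?_, rfl⟩⟩
    · rw [c3_rowF, Finset.mem_filter]; exact ⟨Finset.mem_univ _, h10⟩
    · rw [c3_colF, Finset.mem_filter]; exact ⟨Finset.mem_univ _, h01⟩
  have hintc : 1 ≤ (X ∩ Y).card := Finset.card_pos.2 ⟨_, h00⟩
  have hcu := Finset.card_union_add_card_inter X Y
  have := Finset.card_le_card hsub
  omega

end Claim3Aux2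

section Claim3Aux3
variable {k : ℕ}

/-- counting bound for a down-set with interior -/
lemma c3_A_count (hk : 0 < k) {A : Finset (Fin (1+1) → Fin (k+1))} (hAds : isDownSet A)
    (h11 : ![(1:Fin (k+1)), 1] ∈ A) :
    A.card ≤ (2*k+1) + ((c3_colF k A).card - 1) * ((c3_rowF k A).card - 1) := by
  have h1v : ((1 : Fin (k+1)) : ℕ) = 1 := by rw [Fin.val_one']; exact Nat.mod_eq_of_lt (by omega)
  have h1m : 1 % (k+1) = 1 := Nat.mod_eq_of_lt (by omega)
  set axisP : (Fin (1+1) → Fin (k+1)) → Prop := fun x => (x 0 : ℕ) = 0 ∨ (x 1 : ℕ) = 0 with haxisP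
  have hsplit := Finset.card_filter_add_card_filter_not (s := A) (p := axisP)
  -- axis part
  have hax : A.filter axisP ⊆ c3_axes k := fun z hz => c3_mem_axes.2 (Finset.mem_filter.1 hz).2
  have haxcard : (A.filter axisP).card ≤ 2*k+1 := c3_card_axes ▸ Finset.card_le_card hax
  -- interior part
  have h0row : (0 : Fin (k+1)) ∈ c3_rowF k A := by
    rw [c3_rowF, Finset.mem_filter]
    exact ⟨Finset.mem_univ _, hAds _ h11 _ (by
      intro j; rcases c3_fin2_cases j with rfl | rfl <;> simp)⟩
  have h0col : (0 : Fin (k+1)) ∈ c3_colF k A := by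
    rw [c3_colF, Finset.mem_filter]
    exact ⟨Finset.mem_univ _, hAds _ h11 _ (by
      intro j; rcases c3_fin2_cases j with rfl | rfl <;> simp)⟩
  have hintsub : (A.filter fun x => ¬ axisP x).image (fun x => (x 0, x 1)) ⊆
      ((c3_colF k A).erase 0) ×ˢ ((c3_rowF k A).erase 0) := by
    intro pr hpr
    obtain ⟨x, hx, rfl⟩ := Finset.mem_image.1 hpr
    obtain ⟨hxA, hxn⟩ := Finset.mem_filter.1 hx
    simp only [haxisP] at hxn
    push_neg at hxn
    obtain ⟨hx0, hx1⟩ := hxn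
    rw [Finset.mem_product]
    constructor
    · refine Finset.mem_erase.2 ⟨fun hc => by simp only [Prod.fst] at hc; rw [hc] at hx0; simp at hx0, ?_⟩
      rw [c3_colF, Finset.mem_filter]
      refine ⟨Finset.mem_univ _, hAds x hxA _ ?_⟩
      intro j; rcases c3_fin2_cases j with rfl | rfl <;> simp [h1v, h1m] <;> omega
    · refine Finset.mem_erase.2 ⟨fun hc => by simp only [Prod.snd] at hc; rw [hc] at hx1; simp at hx1, ?_⟩
      rw [c3_rowF, Finset.mem_filter]
      refine ⟨Finset.mem_univ _, hAds x hxA _ ?_⟩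
      intro j; rcases c3_fin2_cases j with rfl | rfl <;> simp [h1v, h1m] <;> omega
  have hinj : Set.InjOn (fun x : Fin (1+1) → Fin (k+1) => (x 0, x 1))
      (A.filter fun x => ¬ axisP x) := by
    intro u hu v hv huv
    rw [c3_eta2 u, c3_eta2 v]
    rw [Prod.mk.injEq] at huv
    rw [huv.1, huv.2]
  have hintcard : (A.filter fun x => ¬ axisP x).card ≤
      ((c3_colF k A).card - 1) * ((c3_rowF k A).card - 1) := by
    calc (A.filter fun x => ¬ axisP x).card
        = ((A.filter fun x => ¬ axisP x).image (fun x => (x 0, x 1))).card :=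
          (Finset.card_image_of_injOn hinj).symm
      _ ≤ (((c3_colF k A).erase 0) ×ˢ ((c3_rowF k A).erase 0)).card := Finset.card_le_card hintsub
      _ = ((c3_colF k A).card - 1) * ((c3_rowF k A).card - 1) := by
          rw [Finset.card_product, Finset.card_erase_of_mem h0col, Finset.card_erase_of_mem h0row]
  omega

/-- arithmetic: if `ab ≥ p(p-1)+1` and `q ≤ p` then `p+q ≤ a+b` -/
lemma c3_arith1 {a b p q : ℕ} (hq : q ≤ p) (h : p*(p-1)+1 ≤ a*b) : p + q ≤ a + b := by
  rcases Nat.eq_zero_or_pos p with rfl | hp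
  · have : 1 ≤ a*b := h
    have ha : 1 ≤ a := by by_contra hc; push_neg at hc; interval_cases a <;> omega
    have hb : 1 ≤ b := by by_contra hc; push_neg at hc; interval_cases b <;> omega
    omega
  obtain ⟨p', rfl⟩ : ∃ p', p = p'+1 := ⟨p-1, by omega⟩
  by_contra hcon
  push_neg at hcon
  have h1 : a + b ≤ 2*p' + 1 := by omega
  have h2 : (p'+1)*p' + 1 ≤ a*b := by simpa using h
  have h3 : ((p':ℤ)+1)*(p':ℤ) + 1 ≤ (a:ℤ)*(b:ℤ) := by exact_mod_cast h2
  have h4 : (a:ℤ) + (b:ℤ) ≤ 2*(p':ℤ) + 1 := by exact_mod_cast h1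
  nlinarith [sq_nonneg ((a:ℤ) - (b:ℤ))]

/-- arithmetic: if `ab ≥ p²+1` and `q ≤ p+1` then `p+q ≤ a+b` -/
lemma c3_arith2 {a b p q : ℕ} (hq : q ≤ p + 1) (h : p*p+1 ≤ a*b) : p + q ≤ a + b := by
  by_contra hcon
  push_neg at hcon
  have h1 : a + b ≤ 2*p := by omega
  have h3 : (p:ℤ)*(p:ℤ) + 1 ≤ (a:ℤ)*(b:ℤ) := by exact_mod_cast h
  have h4 : (a:ℤ) + (b:ℤ) ≤ 2*(p:ℤ) := by exact_mod_cast h1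
  nlinarith [sq_nonneg ((a:ℤ) - (b:ℤ))]

end Claim3Aux3

section Claim3Aux4
variable {k : ℕ}

lemma c3_B_count1 (hk : 0 < k) {B : Finset (Fin (1+1) → Fin (k+1))} (hB : isInitSeg B)
    {pf : Fin (k+1)} (hpfB : ![(1:Fin (k+1)), pf] ∈ B) (hp1 : 1 ≤ (pf:ℕ)) :
    (2*k+1) + ((pf:ℕ) * ((pf:ℕ)-1) + 1) ≤ B.card := by
  have h1v : ((1 : Fin (k+1)) : ℕ) = 1 := by rw [Fin.val_one']; exact Nat.mod_eq_of_lt (by omega)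
  have haxes : c3_axes k ⊆ B := by
    intro z hz
    exact hB _ hpfB z (Or.inr (c3_plt_axis_int (c3_mem_axes.1 hz)
      (by simp [Nat.mod_eq_of_lt (show 1 < k+1 by omega)]) (by simp; omega)))
  set rect := (Finset.Icc (1:Fin (k+1)) pf) ×ˢ (Finset.Ico (1:Fin (k+1)) pf) with hrect
  set LS := rect.image (fun v : Fin (k+1) × Fin (k+1) => ![v.1, v.2]) ∪ {![(1:Fin (k+1)), pf]}
    with hLS
  have hrectmem : ∀ u v : Fin (k+1), (u,v) ∈ rect →
      1 ≤ (u:ℕ) ∧ (u:ℕ) ≤ (pf:ℕ) ∧ 1 ≤ (v:ℕ) ∧ (v:ℕ) < (pf:ℕ) := by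
    intro u v huv
    rw [hrect, Finset.mem_product, Finset.mem_Icc, Finset.mem_Ico] at huv
    obtain ⟨⟨h1, h2⟩, h3, h4⟩ := huv
    have v1 := Fin.le_def.1 h1; have v2 := Fin.le_def.1 h2
    have v3 := Fin.le_def.1 h3; have v4 := Fin.lt_def.1 h4
    rw [h1v] at v1 v3
    exact ⟨v1, v2, v3, v4⟩
  have hLSB : LS ⊆ B := by
    rw [hLS]
    refine Finset.union_subset ?_ (by simpa using hpfB)
    intro z hz
    obtain ⟨⟨u, v⟩, huv, rfl⟩ := Finset.mem_image.1 hz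
    obtain ⟨hu1, hu2, hv1, hv2⟩ := hrectmem u v huv
    have hplt : plt ![u, v] ![(1:Fin (k+1)), pf] := by
      by_cases hup : (u:ℕ) = (pf:ℕ)
      · have hu : u = pf := Fin.ext hup
        rw [hu]
        exact c3_plt_shell (by omega) hv1 (by omega)
      · exact c3_plt_int_maxlt hu1 hv1 (by omega) hp1 (by rw [h1v]; omega)
    exact hB _ hpfB _ (Or.inr hplt)
  have hdisj : Disjoint (c3_axes k) LS := by
    rw [Finset.disjoint_left]
    intro z hz hz'
    have hax := c3_mem_axes.1 hz
    rw [hLS, Finset.mem_union] at hz'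
    rcases hz' with hz' | hz'
    · obtain ⟨⟨u, v⟩, huv, rfl⟩ := Finset.mem_image.1 hz'
      obtain ⟨hu1, -, hv1, -⟩ := hrectmem u v huv
      simp at hax
      simp only [Fin.ext_iff, Fin.val_zero] at * <;> omega
    · rw [Finset.mem_singleton] at hz'
      rw [hz'] at hax
      simp [h1v] at hax
      simp only [Fin.ext_iff, Fin.val_zero] at * <;> omega
  have hpairinj : Function.Injective (fun v : Fin (k+1) × Fin (k+1) => ![v.1, v.2]) := by
    intro u v h
    obtain ⟨h1, h2⟩ := c3_pair_eq h
    exact Prod.ext h1 h2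
  have hnotin : ![(1:Fin (k+1)), pf] ∉ rect.image (fun v : Fin (k+1) × Fin (k+1) => ![v.1, v.2]) := by
    intro hcon
    obtain ⟨⟨u, v⟩, huv, heq⟩ := Finset.mem_image.1 hcon
    obtain ⟨-, -, -, hv2⟩ := hrectmem u v huv
    have h2 := (c3_pair_eq heq).2
    simp only [Prod.snd] at h2
    rw [h2] at hv2
    omega
  have hLScard : LS.card = (pf:ℕ) * ((pf:ℕ)-1) + 1 := by
    rw [hLS, Finset.union_comm, ← Finset.insert_eq, Finset.card_insert_of_notMem hnotin,
      Finset.card_image_of_injective _ hpairinj, hrect, Finset.card_product, Fin.card_Icc,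
      Fin.card_Ico, h1v]
    simp [Nat.add_sub_cancel]
  have hsub : c3_axes k ∪ LS ⊆ B := Finset.union_subset haxes hLSB
  have := Finset.card_le_card hsub
  rw [Finset.card_union_of_disjoint hdisj, c3_card_axes, hLScard] at this
  omega

lemma c3_B_count2 (hk : 0 < k) {B : Finset (Fin (1+1) → Fin (k+1))} (hB : isInitSeg B)
    {qf : Fin (k+1)} (hqfB : ![qf, (1:Fin (k+1))] ∈ B) (hq1 : 1 ≤ (qf:ℕ)) :
    (2*k+1) + (((qf:ℕ)-1) * ((qf:ℕ)-1) + 1) ≤ B.card := by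
  have h1v : ((1 : Fin (k+1)) : ℕ) = 1 := by rw [Fin.val_one']; exact Nat.mod_eq_of_lt (by omega)
  have haxes : c3_axes k ⊆ B := by
    intro z hz
    exact hB _ hqfB z (Or.inr (c3_plt_axis_int (c3_mem_axes.1 hz) (by simp; omega)
      (by simp [Nat.mod_eq_of_lt (show 1 < k+1 by omega)])))
  set w : Fin (k+1) := ⟨(qf:ℕ) - 1, by omega⟩ with hw
  have hwval : (w:ℕ) = (qf:ℕ) - 1 := rfl
  set rect := (Finset.Icc (1:Fin (k+1)) w) ×ˢ (Finset.Icc (1:Fin (k+1)) w) with hrect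
  set LS := rect.image (fun v : Fin (k+1) × Fin (k+1) => ![v.1, v.2]) ∪ {![qf, (1:Fin (k+1))]}
    with hLS
  have hrectmem : ∀ u v : Fin (k+1), (u,v) ∈ rect →
      1 ≤ (u:ℕ) ∧ (u:ℕ) ≤ (qf:ℕ) - 1 ∧ 1 ≤ (v:ℕ) ∧ (v:ℕ) ≤ (qf:ℕ) - 1 := by
    intro u v huv
    rw [hrect, Finset.mem_product, Finset.mem_Icc, Finset.mem_Icc] at huv
    obtain ⟨⟨h1, h2⟩, h3, h4⟩ := huv
    have v1 := Fin.le_def.1 h1; have v2 := Fin.le_def.1 h2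
    have v3 := Fin.le_def.1 h3; have v4 := Fin.le_def.1 h4
    rw [h1v] at v1 v3
    rw [hwval] at v2 v4
    exact ⟨v1, v2, v3, v4⟩
  have hLSB : LS ⊆ B := by
    rw [hLS]
    refine Finset.union_subset ?_ (by simpa using hqfB)
    intro z hz
    obtain ⟨⟨u, v⟩, huv, rfl⟩ := Finset.mem_image.1 hz
    obtain ⟨hu1, hu2, hv1, hv2⟩ := hrectmem u v huv
    have hplt : plt ![u, v] ![qf, (1:Fin (k+1))] :=
      c3_plt_int_maxlt hu1 hv1 hq1 (by omega) (by rw [h1v]; omega)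
    exact hB _ hqfB _ (Or.inr hplt)
  have hdisj : Disjoint (c3_axes k) LS := by
    rw [Finset.disjoint_left]
    intro z hz hz'
    have hax := c3_mem_axes.1 hz
    rw [hLS, Finset.mem_union] at hz'
    rcases hz' with hz' | hz'
    · obtain ⟨⟨u, v⟩, huv, rfl⟩ := Finset.mem_image.1 hz'
      obtain ⟨hu1, -, hv1, -⟩ := hrectmem u v huv
      simp at hax
      simp only [Fin.ext_iff, Fin.val_zero] at * <;> omega
    · rw [Finset.mem_singleton] at hz'
      rw [hz'] at hax
      simp [h1v] at hax
      simp only [Fin.ext_iff, Fin.val_zero] at * <;> omega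
  have hpairinj : Function.Injective (fun v : Fin (k+1) × Fin (k+1) => ![v.1, v.2]) := by
    intro u v h
    obtain ⟨h1, h2⟩ := c3_pair_eq h
    exact Prod.ext h1 h2
  have hnotin : ![qf, (1:Fin (k+1))] ∉ rect.image (fun v : Fin (k+1) × Fin (k+1) => ![v.1, v.2]) := by
    intro hcon
    obtain ⟨⟨u, v⟩, huv, heq⟩ := Finset.mem_image.1 hcon
    obtain ⟨-, hu2, -, -⟩ := hrectmem u v huv
    have h2 := (c3_pair_eq heq).1
    simp only [Prod.fst] at h2
    rw [h2] at hu2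
    omega
  have hLScard : LS.card = ((qf:ℕ)-1) * ((qf:ℕ)-1) + 1 := by
    rw [hLS, Finset.union_comm, ← Finset.insert_eq, Finset.card_insert_of_notMem hnotin,
      Finset.card_image_of_injective _ hpairinj, hrect, Finset.card_product, Fin.card_Icc,
      h1v, hwval]
    simp [Nat.add_sub_cancel]
  have hsub : c3_axes k ∪ LS ⊆ B := Finset.union_subset haxes hLSB
  have := Finset.card_le_card hsub
  rw [Finset.card_union_of_disjoint hdisj, c3_card_axes, hLScard] at this
  omega

end Claim3Aux4

/-- **Claim 3.** Let `k ≥ 1`, let `A ⊆ [k]^2` be a compressed set, and let `B` be the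
initial segment of the `≤`-order on `[k]^2` with `|B| = |A|`. Then `|d(A)| ≥ |d(B)|`.
(The alphabet `[k]` with `k ≥ 1` is rendered as `Fin (k+1)`.) -/
theorem claim3_dim_two (k : ℕ)
    (A : Finset (Fin (1 + 1) → Fin (k + 1))) (hA : IsCompressed A)
    (B : Finset (Fin (1 + 1) → Fin (k + 1)))
    (hB : isInitSeg B) (hcard : B.card = A.card) :
    (dShadow B).card ≤ (dShadow A).card := by
  rcases Nat.eq_zero_or_pos k with rfl | hk
  · have hempty : dShadow B = ∅ := by
      apply Finset.eq_empty_of_forall_notMem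
      intro z hz
      obtain ⟨x, -, i, hi, -⟩ := c3_mem_dShadow.1 hz
      exact hi (Fin.eq_zero _)
    rw [hempty]; simp
  have h1v : ((1 : Fin (k+1)) : ℕ) = 1 := by rw [Fin.val_one']; exact Nat.mod_eq_of_lt (by omega)
  have h1m : 1 % (k+1) = 1 := Nat.mod_eq_of_lt (by omega)
  have hAds : isDownSet A := c3_downset_of_compressed hA
  have hBds : isDownSet B := c3_downset_of_initSeg hB
  by_cases hint : ∃ x ∈ B, 1 ≤ (x 0 : ℕ) ∧ 1 ≤ (x 1 : ℕ)
  · -- main case: B contains an interior point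
    obtain ⟨w, hwB, hw0, hw1⟩ := hint
    have h11B : ![(1:Fin (k+1)), 1] ∈ B := by
      apply hBds w hwB
      intro j; rcases c3_fin2_cases j with rfl | rfl <;> simp [h1v, h1m] <;> omega
    have hrow1 : (1:Fin (k+1)) ∈ c3_rowF k B := by
      rw [c3_rowF, Finset.mem_filter]; exact ⟨Finset.mem_univ _, h11B⟩
    have hcol1 : (1:Fin (k+1)) ∈ c3_colF k B := by
      rw [c3_colF, Finset.mem_filter]; exact ⟨Finset.mem_univ _, h11B⟩
    obtain ⟨pf, hpf_def⟩ : ∃ pf : Fin (k+1), pf = (c3_rowF k B).max' ⟨1, hrow1⟩ := ⟨_, rfl⟩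
    obtain ⟨qf, hqf_def⟩ : ∃ qf : Fin (k+1), qf = (c3_colF k B).max' ⟨1, hcol1⟩ := ⟨_, rfl⟩
    have hpfB : ![(1:Fin (k+1)), pf] ∈ B := by
      have h := Finset.max'_mem (c3_rowF k B) ⟨1, hrow1⟩
      rw [← hpf_def, c3_rowF, Finset.mem_filter] at h
      exact h.2
    have hqfB : ![qf, (1:Fin (k+1))] ∈ B := by
      have h := Finset.max'_mem (c3_colF k B) ⟨1, hcol1⟩
      rw [← hqf_def, c3_colF, Finset.mem_filter] at h
      exact h.2
    have hpmax : ∀ b ∈ c3_rowF k B, b ≤ pf := by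
      intro b hb; rw [hpf_def]; exact Finset.le_max' _ b hb
    have hqmax : ∀ b ∈ c3_colF k B, b ≤ qf := by
      intro b hb; rw [hqf_def]; exact Finset.le_max' _ b hb
    have hp1 : 1 ≤ (pf:ℕ) := by
      have h := Fin.le_def.1 (hpmax 1 hrow1)
      omega
    have hq1 : 1 ≤ (qf:ℕ) := by
      have h := Fin.le_def.1 (hqmax 1 hcol1)
      omega
    have hrowIic : c3_rowF k B = Finset.Iic pf := by
      ext b
      rw [c3_rowF, Finset.mem_filter]
      simp only [Finset.mem_univ, true_and, Finset.mem_Iic]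
      constructor
      · intro hb
        exact hpmax b (by rw [c3_rowF, Finset.mem_filter]; exact ⟨Finset.mem_univ _, hb⟩)
      · intro hb
        refine hBds _ hpfB _ ?_
        intro j; rcases c3_fin2_cases j with rfl | rfl
        · simp
        · simpa using Fin.le_def.1 hb
    have hcolIic : c3_colF k B = Finset.Iic qf := by
      ext b
      rw [c3_colF, Finset.mem_filter]
      simp only [Finset.mem_univ, true_and, Finset.mem_Iic]
      constructor
      · intro hb
        exact hqmax b (by rw [c3_colF, Finset.mem_filter]; exact ⟨Finset.mem_univ _, hb⟩)
      · intro hb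
        refine hBds _ hqfB _ ?_
        intro j; rcases c3_fin2_cases j with rfl | rfl
        · simpa using Fin.le_def.1 hb
        · simp
    have hrowBcard : (c3_rowF k B).card = (pf:ℕ) + 1 := by rw [hrowIic, Fin.card_Iic]
    have hcolBcard : (c3_colF k B).card = (qf:ℕ) + 1 := by rw [hcolIic, Fin.card_Iic]
    have hqp : (qf:ℕ) ≤ (pf:ℕ) + 1 := by
      by_contra hcon
      push_neg at hcon
      set w' : Fin (k+1) := ⟨(qf:ℕ) - 1, by omega⟩ with hw'
      have hw'val : (w':ℕ) = (qf:ℕ) - 1 := rfl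
      have hplt : plt ![(1:Fin (k+1)), w'] ![qf, (1:Fin (k+1))] := by
        apply c3_plt_int_maxlt (by omega) (by rw [hw'val]; omega) (by omega) (by omega)
        rw [h1v, hw'val]; omega
      have hw'B : ![(1:Fin (k+1)), w'] ∈ B := hB _ hqfB _ (Or.inr hplt)
      have hle : w' ≤ pf := hpmax w'
        (by rw [c3_rowF, Finset.mem_filter]; exact ⟨Finset.mem_univ _, hw'B⟩)
      have h := Fin.le_def.1 hle
      rw [hw'val] at h
      omega
    have hBcount' : (2*k+1) + 1 ≤ B.card := by
      have := c3_B_count1 hk hB hpfB hp1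
      omega
    have hAint : ∃ x ∈ A, 1 ≤ (x 0:ℕ) ∧ 1 ≤ (x 1:ℕ) := by
      by_contra hcon
      push_neg at hcon
      have hsubax : A ⊆ c3_axes k := by
        intro z hz
        rcases Nat.eq_zero_or_pos (z 0 : ℕ) with h | h
        · exact c3_mem_axes.2 (Or.inl h)
        · have := hcon z hz h
          exact c3_mem_axes.2 (Or.inr (by omega))
      have := Finset.card_le_card hsubax
      rw [c3_card_axes] at this
      omega
    obtain ⟨xA, hxA, hxA0, hxA1⟩ := hAint
    have h11A : ![(1:Fin (k+1)), 1] ∈ A := hAds xA hxA ![(1:Fin (k+1)), 1]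
      (by intro j; rcases c3_fin2_cases j with rfl | rfl <;> simp [h1v, h1m] <;> omega)
    have h10A : ![(1:Fin (k+1)), 0] ∈ A := hAds _ h11A ![(1:Fin (k+1)), 0]
      (by intro j; rcases c3_fin2_cases j with rfl | rfl <;> simp)
    have h01A : ![(0:Fin (k+1)), 1] ∈ A := hAds _ h11A ![(0:Fin (k+1)), 1]
      (by intro j; rcases c3_fin2_cases j with rfl | rfl <;> simp)
    have h10B : ![(1:Fin (k+1)), 0] ∈ B := hBds _ h11B ![(1:Fin (k+1)), 0]
      (by intro j; rcases c3_fin2_cases j with rfl | rfl <;> simp)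
    have h01B : ![(0:Fin (k+1)), 1] ∈ B := hBds _ h11B ![(0:Fin (k+1)), 1]
      (by intro j; rcases c3_fin2_cases j with rfl | rfl <;> simp)
    have h01ne : (0 : Fin (k+1)) ≠ 1 := fun hc => by
      have := congrArg Fin.val hc
      rw [h1v] at this
      simp at this
    have hrowA2 : 2 ≤ (c3_rowF k A).card := by
      have hsub : ({0, 1} : Finset (Fin (k+1))) ⊆ c3_rowF k A := by
        intro t ht
        rcases Finset.mem_insert.1 ht with rfl | ht
        · rw [c3_rowF, Finset.mem_filter]; exact ⟨Finset.mem_univ _, h10A⟩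
        · rw [Finset.mem_singleton] at ht; subst ht
          rw [c3_rowF, Finset.mem_filter]; exact ⟨Finset.mem_univ _, h11A⟩
      have hcard01 : ({0, 1} : Finset (Fin (k+1))).card = 2 := by
        rw [Finset.card_insert_of_notMem (fun hc => h01ne (Finset.mem_singleton.1 hc)),
          Finset.card_singleton]
      calc 2 = ({0, 1} : Finset (Fin (k+1))).card := hcard01.symm
        _ ≤ _ := Finset.card_le_card hsub
    have hcolA2 : 2 ≤ (c3_colF k A).card := by
      have hsub : ({0, 1} : Finset (Fin (k+1))) ⊆ c3_colF k A := by
        intro t ht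
        rcases Finset.mem_insert.1 ht with rfl | ht
        · rw [c3_colF, Finset.mem_filter]; exact ⟨Finset.mem_univ _, h01A⟩
        · rw [Finset.mem_singleton] at ht; subst ht
          rw [c3_colF, Finset.mem_filter]; exact ⟨Finset.mem_univ _, h11A⟩
      have hcard01 : ({0, 1} : Finset (Fin (k+1))).card = 2 := by
        rw [Finset.card_insert_of_notMem (fun hc => h01ne (Finset.mem_singleton.1 hc)),
          Finset.card_singleton]
      calc 2 = ({0, 1} : Finset (Fin (k+1))).card := hcard01.symm
        _ ≤ _ := Finset.card_le_card hsub
    have hAcount := c3_A_count hk hAds h11A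
    have hshB := c3_shadow_card_upper hk B hBds h10B h01B
    have hshA := c3_shadow_card_lower hk A
    rcases le_or_gt (qf:ℕ) (pf:ℕ) with hq | hq
    · have hBcount := c3_B_count1 hk hB hpfB hp1
      have hL : (pf:ℕ) * ((pf:ℕ)-1) + 1 ≤ ((c3_colF k A).card - 1) * ((c3_rowF k A).card - 1) := by
        omega
      have hfin := c3_arith1 hq hL
      omega
    · have hq' : (qf:ℕ) = (pf:ℕ) + 1 := by omega
      have hBcount := c3_B_count2 hk hB hqfB hq1
      have hqm : (qf:ℕ) - 1 = (pf:ℕ) := by omega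
      rw [hqm] at hBcount
      have hL : (pf:ℕ) * (pf:ℕ) + 1 ≤ ((c3_colF k A).card - 1) * ((c3_rowF k A).card - 1) := by
        omega
      have hfin := c3_arith2 (le_of_eq hq') hL
      omega
  · -- easy case: B has no interior point
    rcases Finset.eq_empty_or_nonempty (dShadow B) with hDB | ⟨z, hz⟩
    · rw [hDB]; simp
    obtain ⟨x, hx, i, hi, hupd⟩ := c3_mem_dShadow.1 hz
    have h00B : ![(0:Fin (k+1)), 0] ∈ B := hBds x hx ![(0:Fin (k+1)), 0]
      (by intro j; rcases c3_fin2_cases j with rfl | rfl <;> simp)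
    have hxne : x ≠ ![0, 0] := by
      intro hcon
      apply hi
      rw [hcon]
      rcases c3_fin2_cases i with rfl | rfl <;> simp
    have h2B : 1 < B.card := Finset.one_lt_card.2 ⟨x, hx, ![0,0], h00B, hxne⟩
    have h2A : 1 < A.card := by omega
    obtain ⟨u, hu, v, hv, huv⟩ := Finset.one_lt_card.1 h2A
    have hAne : ∃ wa ∈ A, ∃ iw : Fin (1+1), wa iw ≠ 0 := by
      by_contra hcon
      push_neg at hcon
      have heq : ∀ wa ∈ A, wa = ![0, 0] := by
        intro wa hwa
        rw [c3_eta2 wa, hcon wa hwa 0, hcon wa hwa 1]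
      exact huv ((heq u hu).trans (heq v hv).symm)
    obtain ⟨wA, hwA, iw, hiw⟩ := hAne
    have hAsh : Function.update wA iw 0 ∈ dShadow A := c3_mem_dShadow.2 ⟨wA, hwA, iw, hiw, rfl⟩
    have hBsub : dShadow B ⊆ {![0, 0]} := by
      intro z' hz'
      obtain ⟨x', hx', i', hi', hupd'⟩ := c3_mem_dShadow.1 hz'
      have hax : ¬(1 ≤ (x' 0:ℕ) ∧ 1 ≤ (x' 1:ℕ)) := fun hc => hint ⟨x', hx', hc⟩
      rw [Finset.mem_singleton, ← hupd']
      rcases c3_fin2_cases i' with rfl | rfl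
      · have hne : (x' 0 : ℕ) ≠ 0 := fun hcc => hi' (Fin.ext hcc)
        have hx1z : (x' 1 : ℕ) = 0 := by
          by_contra hcc
          exact hax ⟨by omega, by omega⟩
        rw [c3_upd0, show x' 1 = (0:Fin (k+1)) from Fin.ext (by simp [hx1z])]
      · have hne : (x' 1 : ℕ) ≠ 0 := fun hcc => hi' (Fin.ext hcc)
        have hx0z : (x' 0 : ℕ) = 0 := by
          by_contra hcc
          exact hax ⟨by omega, by omega⟩
        rw [c3_upd1, show x' 0 = (0:Fin (k+1)) from Fin.ext (by simp [hx0z])]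
    have hle1 : (dShadow B).card ≤ 1 := by
      have := Finset.card_le_card hBsub
      simpa using this
    have hge1 : 1 ≤ (dShadow A).card := Finset.card_pos.2 ⟨_, hAsh⟩
    omega
end

section
/- Let k ≥ 1, n ≥ 2 be integers and let A ⊆ [k]^n be a compressed set. If x, y ∈ [k]^n satisfy x ≤ y in the ≤-order, y ∈ A, and x_i = y_i for some index i, then x ∈ A. -/
open Finset
open scoped Classical

/-! ### Auxiliary lemmas -/

section Aux

private lemma aux_sum_two_pow_lt (m : ℕ) : ∑ a ∈ Finset.range m, 2 ^ a < 2 ^ m := by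
  induction m with
  | zero => simp
  | succ m ih => rw [Finset.sum_range_succ, pow_succ]; omega

/-- the binary value of a finite set of coordinates. -/
private noncomputable def bsum {N : ℕ} (X : Finset (Fin N)) : ℕ := ∑ j ∈ X, 2 ^ (j : ℕ)

private lemma binLT_bsum {N : ℕ} {X Y : Finset (Fin N)} (h : binLT X Y) : bsum X < bsum Y := by
  obtain ⟨m, hmY, hmX, hmax⟩ := h
  have hXY : ∑ j ∈ X \ Y, 2 ^ (j : ℕ) < 2 ^ (m : ℕ) := by
    have hsub : (X \ Y).image (fun j : Fin N => (j : ℕ)) ⊆ Finset.range (m : ℕ) := by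
      intro a ha
      simp only [Finset.mem_image, Finset.mem_sdiff] at ha
      obtain ⟨j, ⟨hjX, hjY⟩, rfl⟩ := ha
      have hle : j ≤ m := hmax j (Or.inl ⟨hjX, hjY⟩)
      have hne : j ≠ m := by rintro rfl; exact hmX hjX
      simp only [Finset.mem_range]
      exact lt_of_le_of_ne (by exact_mod_cast hle) (fun hv => hne (Fin.val_injective hv))
    calc ∑ j ∈ X \ Y, 2 ^ (j : ℕ)
        = ∑ a ∈ (X \ Y).image (fun j : Fin N => (j : ℕ)), 2 ^ a := by
          rw [Finset.sum_image (fun a _ b _ h => Fin.val_injective h)]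
      _ ≤ ∑ a ∈ Finset.range (m : ℕ), 2 ^ a :=
          Finset.sum_le_sum_of_subset hsub
      _ < 2 ^ (m : ℕ) := aux_sum_two_pow_lt _
  have hYX : 2 ^ (m : ℕ) ≤ ∑ j ∈ Y \ X, 2 ^ (j : ℕ) :=
    Finset.single_le_sum (f := fun j : Fin N => 2 ^ (j : ℕ)) (fun _ _ => Nat.zero_le _)
      (Finset.mem_sdiff.2 ⟨hmY, hmX⟩)
  have e1 : ∑ j ∈ X ∩ Y, 2 ^ (j : ℕ) + ∑ j ∈ X \ Y, 2 ^ (j : ℕ) = bsum X :=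
    Finset.sum_inter_add_sum_sdiff X Y _
  have e2 : ∑ j ∈ Y ∩ X, 2 ^ (j : ℕ) + ∑ j ∈ Y \ X, 2 ^ (j : ℕ) = bsum Y :=
    Finset.sum_inter_add_sum_sdiff Y X _
  rw [Finset.inter_comm] at e2
  omega

private lemma binLT_total {N : ℕ} {X Y : Finset (Fin N)} (h : X ≠ Y) : binLT X Y ∨ binLT Y X := by
  have hne : ((X \ Y) ∪ (Y \ X)).Nonempty := by
    rw [Finset.nonempty_iff_ne_empty]
    intro he
    rw [Finset.union_eq_empty] at he
    exact h (Finset.Subset.antisymm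
      (Finset.sdiff_eq_empty_iff_subset.1 he.1) (Finset.sdiff_eq_empty_iff_subset.1 he.2))
  set m := ((X \ Y) ∪ (Y \ X)).max' hne with hm
  have hmmem := ((X \ Y) ∪ (Y \ X)).max'_mem hne
  have hmax : ∀ j : Fin N, ((j ∈ X ∧ j ∉ Y) ∨ (j ∈ Y ∧ j ∉ X)) → j ≤ m := by
    intro j hj
    apply Finset.le_max'
    rcases hj with ⟨h1, h2⟩ | ⟨h1, h2⟩
    · exact Finset.mem_union_left _ (Finset.mem_sdiff.2 ⟨h1, h2⟩)
    · exact Finset.mem_union_right _ (Finset.mem_sdiff.2 ⟨h1, h2⟩)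
  rw [Finset.mem_union, Finset.mem_sdiff, Finset.mem_sdiff] at hmmem
  rcases hmmem with ⟨h1, h2⟩ | ⟨h1, h2⟩
  · right
    exact ⟨m, h1, h2, fun j hj => hmax j (hj.symm.imp (fun h => h) (fun h => h))⟩
  · left
    exact ⟨m, h1, h2, hmax⟩

private lemma binLT_iff_bsum {N : ℕ} {X Y : Finset (Fin N)} :
    binLT X Y ↔ bsum X < bsum Y := by
  constructor
  · exact binLT_bsum
  · intro h
    have hne : X ≠ Y := by rintro rfl; exact lt_irrefl _ h
    rcases binLT_total hne with h' | h'
    · exact h'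
    · exact absurd (binLT_bsum h') (by omega)

private lemma plt_trans {k N : ℕ} {x y z : Fin N → Fin (k + 1)}
    (h1 : plt x y) (h2 : plt y z) : plt x z := by
  rcases h1 with h1 | ⟨hc1, i, hb1, ha1⟩ <;> rcases h2 with h2 | ⟨hc2, i', hb2, ha2⟩
  · exact Or.inl (h2.trans h1)
  · exact Or.inl (by omega)
  · exact Or.inl (by omega)
  · refine Or.inr ⟨hc1.trans hc2, ?_⟩
    rcases lt_trichotomy i i' with h | h | h
    · exact ⟨i', by rw [ha1 i' h]; exact hb2,
        fun j hj => (ha1 j (h.trans hj)).trans (ha2 j hj)⟩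
    · subst h
      exact ⟨i, binLT_iff_bsum.2 ((binLT_iff_bsum.1 hb1).trans (binLT_iff_bsum.1 hb2)),
        fun j hj => (ha1 j hj).trans (ha2 j hj)⟩
    · exact ⟨i, by rw [← ha2 i h]; exact hb1,
        fun j hj => (ha1 j hj).trans (ha2 j (h.trans hj))⟩

private lemma ple_trans {k N : ℕ} {x y z : Fin N → Fin (k + 1)}
    (h1 : ple x y) (h2 : ple y z) : ple x z := by
  rcases h1 with rfl | h1
  · exact h2
  rcases h2 with rfl | h2
  · exact Or.inr h1
  · exact Or.inr (plt_trans h1 h2)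

private lemma initSeg_isInitSeg (k N m : ℕ) : isInitSeg (initSeg k N m) := by
  intro y hy x hxy
  simp only [initSeg, Finset.mem_filter, Finset.mem_univ, true_and] at hy ⊢
  refine le_trans (Finset.card_le_card ?_) hy
  intro z hz
  simp only [Finset.mem_filter, Finset.mem_univ, true_and] at hz ⊢
  exact ple_trans hz hxy

private lemma mem_rset_removeNth {k N : ℕ} (s : Fin (N + 1)) (x : Fin (N + 1) → Fin (k + 1))
    (i : ℕ) (j : Fin N) : j ∈ rset (s.removeNth x) i ↔ s.succAbove j ∈ rset x i := by
  simp only [rset, Finset.mem_filter, Finset.mem_univ, true_and]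
  exact Iff.rfl

private lemma card_rset_removeNth {k N : ℕ} (s : Fin (N + 1)) (x : Fin (N + 1) → Fin (k + 1))
    (i : ℕ) :
    (rset x i).card = (rset (s.removeNth x) i).card + (if (x s : ℕ) = i then 1 else 0) := by
  have himg : (rset (s.removeNth x) i).image s.succAbove = (rset x i).erase s := by
    ext j
    simp only [Finset.mem_image, Finset.mem_erase]
    constructor
    · rintro ⟨j', hj', rfl⟩
      exact ⟨Fin.succAbove_ne s j', (mem_rset_removeNth s x i j').1 hj'⟩
    · rintro ⟨hne, hj⟩
      obtain ⟨j', rfl⟩ := Fin.exists_succAbove_eq hne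
      exact ⟨j', (mem_rset_removeNth s x i j').2 hj, rfl⟩
  have hcard : (rset (s.removeNth x) i).card = ((rset x i).erase s).card := by
    rw [← himg, Finset.card_image_of_injective _ (Fin.succAbove_right_injective)]
  by_cases h : (x s : ℕ) = i
  · have hs : s ∈ rset x i := by simp [rset, h]
    have hpos : 0 < (rset x i).card := Finset.card_pos.2 ⟨s, hs⟩
    rw [hcard, Finset.card_erase_of_mem hs]
    simp only [h, if_true]
    omega
  · have hs : s ∉ rset x i := by simp [rset, h]
    rw [hcard, Finset.erase_eq_of_notMem hs]
    simp [h]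

private lemma binLT_restrict {k N : ℕ} (s : Fin (N + 1)) (x y : Fin (N + 1) → Fin (k + 1))
    (hs : x s = y s) (i : ℕ) (h : binLT (rset x i) (rset y i)) :
    binLT (rset (s.removeNth x) i) (rset (s.removeNth y) i) := by
  obtain ⟨m, hmY, hmX, hmax⟩ := h
  have hms : m ≠ s := by
    rintro rfl
    apply hmX
    simp only [rset, Finset.mem_filter, Finset.mem_univ, true_and] at hmY ⊢
    rw [hs]; exact hmY
  obtain ⟨m', rfl⟩ := Fin.exists_succAbove_eq hms
  refine ⟨m', (mem_rset_removeNth s y i m').2 hmY,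
    fun hm => hmX ((mem_rset_removeNth s x i m').1 hm), ?_⟩
  intro j hj
  have hj' : (s.succAbove j ∈ rset x i ∧ s.succAbove j ∉ rset y i) ∨
      (s.succAbove j ∈ rset y i ∧ s.succAbove j ∉ rset x i) := by
    rcases hj with ⟨h1, h2⟩ | ⟨h1, h2⟩
    · exact Or.inl ⟨(mem_rset_removeNth s x i j).1 h1,
        fun hh => h2 ((mem_rset_removeNth s y i j).2 hh)⟩
    · exact Or.inr ⟨(mem_rset_removeNth s y i j).1 h1,
        fun hh => h2 ((mem_rset_removeNth s x i j).2 hh)⟩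
  exact (Fin.strictMono_succAbove s).le_iff_le.1 (hmax (s.succAbove j) hj')

private lemma rset_removeNth_eq {k N : ℕ} (s : Fin (N + 1)) (x y : Fin (N + 1) → Fin (k + 1))
    (i : ℕ) (h : rset x i = rset y i) :
    rset (s.removeNth x) i = rset (s.removeNth y) i := by
  ext j
  rw [mem_rset_removeNth, mem_rset_removeNth, h]

private lemma ple_restrict {k N : ℕ} (s : Fin (N + 1)) (x y : Fin (N + 1) → Fin (k + 1))
    (hs : x s = y s) (h : ple x y) : ple (s.removeNth x) (s.removeNth y) := by
  have hif : ∀ i : ℕ, (if (x s : ℕ) = i then 1 else 0) = (if (y s : ℕ) = i then 1 else 0) := by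
    intro i; rw [hs]
  rcases h with rfl | h
  · exact Or.inl rfl
  right
  rcases h with h | ⟨hc, i, hb, ha⟩
  · left
    have hx0 := card_rset_removeNth s x 0
    have hy0 := card_rset_removeNth s y 0
    have := hif 0
    omega
  · right
    constructor
    · have hx0 := card_rset_removeNth s x 0
      have hy0 := card_rset_removeNth s y 0
      have := hif 0
      omega
    · exact ⟨i, binLT_restrict s x y hs i hb,
        fun j hj => rset_removeNth_eq s x y j (ha j hj)⟩

private lemma slice_eq_initSeg {k n : ℕ} (A : Finset (Fin (n + 1) → Fin (k + 1)))
    (s : Fin (n + 1)) (hA : compress s A = A) (t : Fin (k + 1)) :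
    (Finset.univ.filter fun y : Fin n → Fin (k + 1) => s.insertNth t y ∈ A) =
      initSeg k n (Finset.univ.filter fun y : Fin n → Fin (k + 1) => s.insertNth t y ∈ A).card := by
  have key : ∀ w : Fin n → Fin (k + 1),
      s.insertNth t w ∈ A ↔
        w ∈ initSeg k n
          (Finset.univ.filter fun y : Fin n → Fin (k + 1) => s.insertNth t y ∈ A).card := by
    intro w
    conv_lhs => rw [← hA]
    simp only [compress, Finset.mem_biUnion, Finset.mem_univ, true_and, Finset.mem_image]
    constructor
    · rintro ⟨t', z, hz, he⟩
      have ht : t' = t := by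
        have := congrFun he s
        simpa [Fin.insertNth_apply_same] using this
      subst ht
      have hz' : z = w := by
        have := congrArg s.removeNth he
        simpa [Fin.removeNth_insertNth] using this
      rwa [← hz']
    · intro hw
      exact ⟨t, w, hw, rfl⟩
  ext y
  simp only [Finset.mem_filter, Finset.mem_univ, true_and]
  exact key y

end Aux

/-- **(10.1).** Let `k ≥ 1`, `n ≥ 2`, and let `A ⊆ [k]^n` be compressed. If `x ≤ y`,
`y ∈ A` and `x_i = y_i` for some `i`, then `x ∈ A`.
(Dimension `n ≥ 2` is rendered as `n + 1` with `n ≥ 1`.) -/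
theorem compressed_key_fact (k n : ℕ) (hn : 1 ≤ n)
    (A : Finset (Fin (n + 1) → Fin (k + 1))) (hA : IsCompressed A)
    (x y : Fin (n + 1) → Fin (k + 1)) (hxy : ple x y) (hy : y ∈ A)
    (i : Fin (n + 1)) (hi : x i = y i) :
    x ∈ A := by
  have hslice := slice_eq_initSeg A i (hA i) (y i)
  have hy' : i.removeNth y ∈
      (Finset.univ.filter fun z : Fin n → Fin (k + 1) => i.insertNth (y i) z ∈ A) := by
    simp only [Finset.mem_filter, Finset.mem_univ, true_and, Fin.insertNth_self_removeNth]
    exact hy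
  rw [hslice] at hy'
  have hx' := initSeg_isInitSeg k n _ _ hy' _ (ple_restrict i x y hi hxy)
  rw [← hslice] at hx'
  simp only [Finset.mem_filter, Finset.mem_univ, true_and] at hx'
  rw [← hi, Fin.insertNth_self_removeNth] at hx'
  exact hx'
end
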